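/- Let ℓ ≥ 4 be an integer, let f_ℓ(z) := ((1+z)^{ℓ−1} − (1−z)^{ℓ−1})/2, and let z_ℓ ∈ (0,1) be the unique root of f_ℓ(z) = 1. Then ln(1+√2) < (ℓ−1)·z_ℓ < 1. Equivalently, γ_ℓ := 1/((ℓ−1)·z_ℓ) satisfies 1 < γ_ℓ < 1/ln(1+√2) = 1/arcsinh(1) ≈ 1.135. -/

import Mathlib

open Finset Real
open scoped Nat

private lemma hasSum_exp_real (x : ℝ) :
    HasSum (fun k : ℕ => x ^ k / (k ! : ℝ)) (Real.exp x) := by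
  rw [Real.exp_eq_exp_ℝ]
  exact NormedSpace.expSeries_div_hasSum_exp x

private lemma sinh_log_one_add_sqrt_two : Real.sinh (Real.log (1 + Real.sqrt 2)) = 1 := by
  have h2 : (0:ℝ) < Real.sqrt 2 := Real.sqrt_pos.mpr (by norm_num)
  have hpos : (0:ℝ) < 1 + Real.sqrt 2 := by linarith
  rw [Real.sinh_eq, Real.exp_neg, Real.exp_log hpos]
  have hs : Real.sqrt 2 ^ 2 = 2 := Real.sq_sqrt (by norm_num)
  field_simp
  nlinarith [hs]

/-- For `ℓ ≥ 4`, the root `z_ℓ ∈ (0,1)` of `((1+z)^{ℓ-1} - (1-z)^{ℓ-1})/2 = 1`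
satisfies `ln(1+√2) < (ℓ-1)·z_ℓ < 1`; equivalently
`γ_ℓ := 1/((ℓ-1)·z_ℓ)` satisfies `1 < γ_ℓ < 1/ln(1+√2)`. -/
theorem step_polynomial_root_bounds
    (ℓ : ℕ) (hℓ : 4 ≤ ℓ) (z : ℝ) (hz : z ∈ Set.Ioo (0 : ℝ) 1)
    (hroot : ((1 + z) ^ (ℓ - 1) - (1 - z) ^ (ℓ - 1)) / 2 = 1) :
    Real.log (1 + Real.sqrt 2) < ((ℓ : ℝ) - 1) * z ∧
    ((ℓ : ℝ) - 1) * z < 1 ∧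
    1 < 1 / (((ℓ : ℝ) - 1) * z) ∧
    1 / (((ℓ : ℝ) - 1) * z) < 1 / Real.log (1 + Real.sqrt 2) := by
  obtain ⟨hz0, hz1⟩ := hz
  set n := ℓ - 1 with hn
  have hn3 : 3 ≤ n := by omega
  have hcast : ((ℓ : ℝ) - 1) = (n : ℝ) := by
    rw [hn, Nat.cast_sub (by omega)]; norm_num
  set t : ℝ := (n : ℝ) * z with ht
  have htpos : 0 < t := by
    have hnpos : (0:ℝ) < (n : ℝ) := by exact_mod_cast (by omega : 0 < n)
    exact mul_pos hnpos hz0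
  -- binomial expansion of the root equation
  set F : Finset ℕ := (Finset.range (n + 1)).filter (fun k => Odd k) with hF
  have key : ∑ k ∈ F, z ^ k * (n.choose k : ℝ) = 1 := by
    have e1 : (1 + z) ^ n = ∑ k ∈ Finset.range (n + 1), z ^ k * (n.choose k : ℝ) := by
      rw [add_comm, add_pow]; simp
    have e2 : (1 - z) ^ n = ∑ k ∈ Finset.range (n + 1), (-z) ^ k * (n.choose k : ℝ) := by
      rw [sub_eq_add_neg, add_comm, add_pow]; simp
    have e3 : (1 + z) ^ n - (1 - z) ^ n
        = ∑ k ∈ Finset.range (n + 1), (z ^ k - (-z) ^ k) * (n.choose k : ℝ) := by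
      rw [e1, e2, ← Finset.sum_sub_distrib]
      congr 1; ext k; ring
    have e4 : ∑ k ∈ Finset.range (n + 1), (z ^ k - (-z) ^ k) * (n.choose k : ℝ)
        = 2 * ∑ k ∈ F, z ^ k * (n.choose k : ℝ) := by
      rw [Finset.mul_sum, hF, Finset.sum_filter]
      congr 1; ext k
      rcases Nat.even_or_odd k with hk | hk
      · simp [hk.neg_pow, Nat.not_odd_iff_even.mpr hk]
      · simp only [hk.neg_pow, if_pos hk]
        ring
    have hroot' := hroot
    rw [e3, e4] at hroot'
    linarith
  have hchoose3pos : 0 < (n.choose 3 : ℝ) := by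
    exact_mod_cast Nat.choose_pos hn3
  -- upper bound: t < 1
  have hub : t < 1 := by
    have hsub : ({1, 3} : Finset ℕ) ⊆ F := by
      intro k hk
      simp only [Finset.mem_insert, Finset.mem_singleton] at hk
      rcases hk with rfl | rfl
      · exact Finset.mem_filter.mpr ⟨Finset.mem_range.mpr (by omega), ⟨0, by norm_num⟩⟩
      · exact Finset.mem_filter.mpr ⟨Finset.mem_range.mpr (by omega), ⟨1, by norm_num⟩⟩
    have hle : ∑ k ∈ ({1, 3} : Finset ℕ), z ^ k * (n.choose k : ℝ)
        ≤ ∑ k ∈ F, z ^ k * (n.choose k : ℝ) := by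
      apply Finset.sum_le_sum_of_subset_of_nonneg hsub
      intro k _ _
      positivity
    rw [Finset.sum_pair (by norm_num)] at hle
    simp only [pow_one, Nat.choose_one_right] at hle
    have h3 : 0 < z ^ 3 * (n.choose 3 : ℝ) := by positivity
    rw [key] at hle
    calc t = z * (n : ℝ) := by rw [ht]; ring
    _ < z * (n:ℝ) + z ^ 3 * (n.choose 3 : ℝ) := by linarith
    _ ≤ 1 := hle
  -- termwise comparison with the sinh series
  have hterm : ∀ k ∈ F, z ^ k * (n.choose k : ℝ) ≤ t ^ k / (k ! : ℝ) := by
    intro k _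
    have hd : (n.choose k : ℝ) * (k ! : ℝ) ≤ (n : ℝ) ^ k := by
      have h1 := Nat.descFactorial_le_pow n k
      rw [Nat.descFactorial_eq_factorial_mul_choose] at h1
      calc (n.choose k : ℝ) * (k ! : ℝ) = ((k ! * n.choose k : ℕ) : ℝ) := by push_cast; ring
      _ ≤ ((n ^ k : ℕ) : ℝ) := by exact_mod_cast h1
      _ = (n : ℝ) ^ k := by push_cast; ring
    have hzk : (0:ℝ) < z ^ k := pow_pos hz0 k
    have hfk : (0:ℝ) < (k ! : ℝ) := by exact_mod_cast Nat.factorial_pos k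
    rw [ht, mul_pow, le_div_iff₀ hfk]
    calc z ^ k * (n.choose k : ℝ) * (k ! : ℝ) = (n.choose k : ℝ) * (k ! : ℝ) * z ^ k := by ring
    _ ≤ (n:ℝ) ^ k * z ^ k := mul_le_mul_of_nonneg_right hd hzk.le
  have hterm3 : z ^ 3 * (n.choose 3 : ℝ) < t ^ 3 / ((3 : ℕ)! : ℝ) := by
    have hd : (n.choose 3 : ℝ) * (((3:ℕ)!) : ℝ) < (n : ℝ) ^ 3 := by
      have h1 := Nat.descFactorial_lt_pow (n := n) (by omega) (k := 3) (by norm_num)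
      rw [Nat.descFactorial_eq_factorial_mul_choose] at h1
      calc (n.choose 3 : ℝ) * (((3:ℕ)!) : ℝ) = (((3:ℕ)! * n.choose 3 : ℕ) : ℝ) := by
            push_cast; ring
      _ < ((n ^ 3 : ℕ) : ℝ) := by exact_mod_cast h1
      _ = (n : ℝ) ^ 3 := by push_cast; ring
    have hzk : (0:ℝ) < z ^ 3 := pow_pos hz0 3
    have hfk : (0:ℝ) < (((3:ℕ)!) : ℝ) := by exact_mod_cast Nat.factorial_pos 3
    rw [ht, mul_pow, lt_div_iff₀ hfk]
    calc z ^ 3 * (n.choose 3 : ℝ) * (((3:ℕ)!) : ℝ)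
        = (n.choose 3 : ℝ) * (((3:ℕ)!) : ℝ) * z ^ 3 := by ring
    _ < (n:ℝ) ^ 3 * z ^ 3 := mul_lt_mul_of_pos_right hd hzk
  have h3F : 3 ∈ F :=
    Finset.mem_filter.mpr ⟨Finset.mem_range.mpr (by omega), ⟨1, by norm_num⟩⟩
  have hsum_lt : (1:ℝ) < ∑ k ∈ F, t ^ k / (k ! : ℝ) := by
    rw [← key]
    exact Finset.sum_lt_sum hterm ⟨3, h3F, hterm3⟩
  -- the finite odd sum is at most sinh t
  have hg : HasSum (fun k : ℕ => (t ^ k / (k ! : ℝ) - (-t) ^ k / (k ! : ℝ)) / 2)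
      (Real.sinh t) := by
    rw [Real.sinh_eq]
    exact ((hasSum_exp_real t).sub (hasSum_exp_real (-t))).div_const 2
  have hgnonneg : ∀ k : ℕ, 0 ≤ (t ^ k / (k ! : ℝ) - (-t) ^ k / (k ! : ℝ)) / 2 := by
    intro k
    rcases Nat.even_or_odd k with hk | hk
    · simp [hk.neg_pow]
    · rw [hk.neg_pow]
      have h0 : (0:ℝ) ≤ t ^ k / (k ! : ℝ) := by positivity
      have : -t ^ k / (k ! : ℝ) = -(t ^ k / (k ! : ℝ)) := by ring
      rw [this]
      linarith
  have hsinh_ge : ∑ k ∈ F, t ^ k / (k ! : ℝ) ≤ Real.sinh t := by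
    have h1 : ∑ k ∈ F, (t ^ k / (k ! : ℝ) - (-t) ^ k / (k ! : ℝ)) / 2 ≤ Real.sinh t :=
      sum_le_hasSum F (fun k _ => hgnonneg k) hg
    have h2 : ∑ k ∈ F, t ^ k / (k ! : ℝ)
        = ∑ k ∈ F, (t ^ k / (k ! : ℝ) - (-t) ^ k / (k ! : ℝ)) / 2 := by
      apply Finset.sum_congr rfl
      intro k hk
      have hodd : Odd k := (Finset.mem_filter.mp hk).2
      rw [hodd.neg_pow]
      ring
    rw [h2]; exact h1
  have hsinh : (1:ℝ) < Real.sinh t := lt_of_lt_of_le hsum_lt hsinh_ge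
  have hlb : Real.log (1 + Real.sqrt 2) < t := by
    rw [← Real.sinh_lt_sinh, sinh_log_one_add_sqrt_two]
    exact hsinh
  have hlogpos : 0 < Real.log (1 + Real.sqrt 2) := by
    apply Real.log_pos
    have := Real.sqrt_pos.mpr (show (0:ℝ) < 2 by norm_num)
    linarith
  rw [hcast]
  exact ⟨hlb, hub, one_lt_one_div htpos hub, one_div_lt_one_div_of_lt hlogpos hlb⟩
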